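/- Let H be a Hilbert space, (g_i) a frame for H, and V : H → H a bounded operator. Then (V g_i) is a frame for H if and only if V is surjective. -/

import Mathlib

open scoped RealInnerProductSpace

open ContinuousLinearMap in
/-- If the adjoint of `V` is bounded below, then `V` is surjective. -/
lemma surj_of_adjoint_bounded_below {H : Type*} [NormedAddCommGroup H]
    [InnerProductSpace ℝ H] [CompleteSpace H] (V : H →L[ℝ] H) {c : ℝ} (hc : 0 < c)
    (h : ∀ f : H, c * (‖f‖ * ‖f‖) ≤ ‖adjoint V f‖ ^ 2) : Function.Surjective V := by
  set T : H →L[ℝ] H := V.comp (adjoint V) with hT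
  have hTf : ∀ f : H, ⟪T f, f⟫ = ‖adjoint V f‖ ^ 2 := by
    intro f
    rw [hT, ContinuousLinearMap.comp_apply, real_inner_comm, ← adjoint_inner_left,
      real_inner_self_eq_norm_sq]
  set B : H →L[ℝ] H →L[ℝ] ℝ := (innerSL ℝ).comp T with hB
  have hBapp : ∀ u w : H, B u w = ⟪T u, w⟫ := fun u w => rfl
  have hcoer : IsCoercive B := by
    refine ⟨c, hc, fun u => ?_⟩
    rw [hBapp, hTf]
    calc c * ‖u‖ * ‖u‖ = c * (‖u‖ * ‖u‖) := by ring
      _ ≤ ‖adjoint V u‖ ^ 2 := h u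
  have hrange := hcoer.range_eq_top
  have hsharp : ∀ u : H, InnerProductSpace.continuousLinearMapOfBilin B u = T u := by
    intro u
    apply ext_inner_right ℝ
    intro w
    rw [InnerProductSpace.continuousLinearMapOfBilin_apply, hBapp]
  intro y
  obtain ⟨u, hu⟩ := LinearMap.range_eq_top.1 hrange y
  exact ⟨adjoint V u, (hsharp u).symm.trans hu⟩

/-- For a frame `(gᵢ)` and a bounded operator `V`, the sequence `(V gᵢ)` is a frame
iff `V` is surjective. -/
theorem stmt_15 (H : Type*) [NormedAddCommGroup H] [InnerProductSpace ℝ H] [CompleteSpace H]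
    (g : ℕ → H)
    (hframe : ∃ A B : ℝ, 0 < A ∧ 0 < B ∧ ∀ f : H,
      Summable (fun i => ⟪f, g i⟫ ^ 2) ∧
      A * ‖f‖ ^ 2 ≤ ∑' i, ⟪f, g i⟫ ^ 2 ∧ ∑' i, ⟪f, g i⟫ ^ 2 ≤ B * ‖f‖ ^ 2)
    (V : H →L[ℝ] H) :
    (∃ A B : ℝ, 0 < A ∧ 0 < B ∧ ∀ f : H,
      Summable (fun i => ⟪f, V (g i)⟫ ^ 2) ∧
      A * ‖f‖ ^ 2 ≤ ∑' i, ⟪f, V (g i)⟫ ^ 2 ∧ ∑' i, ⟪f, V (g i)⟫ ^ 2 ≤ B * ‖f‖ ^ 2) ↔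
    Function.Surjective V := by
  obtain ⟨A, B, hA, hB, hfr⟩ := hframe
  have hadj : ∀ (f : H) (i : ℕ), ⟪f, V (g i)⟫ = ⟪ContinuousLinearMap.adjoint V f, g i⟫ :=
    fun f i => (ContinuousLinearMap.adjoint_inner_left V (g i) f).symm
  constructor
  · rintro ⟨A', B', hA', hB', hfr'⟩
    -- lower frame bound for (V gᵢ) gives: A' ‖f‖² ≤ Σ ⟪V†f, gᵢ⟫² ≤ B ‖V†f‖²
    apply surj_of_adjoint_bounded_below V (c := A' / B) (div_pos hA' hB)
    intro f
    obtain ⟨_, hlow, _⟩ := hfr' f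
    have hup : ∑' i, ⟪ContinuousLinearMap.adjoint V f, g i⟫ ^ 2
        ≤ B * ‖ContinuousLinearMap.adjoint V f‖ ^ 2 :=
      (hfr (ContinuousLinearMap.adjoint V f)).2.2
    have : A' * ‖f‖ ^ 2 ≤ B * ‖ContinuousLinearMap.adjoint V f‖ ^ 2 := by
      refine le_trans ?_ hup
      calc A' * ‖f‖ ^ 2 ≤ ∑' i, ⟪f, V (g i)⟫ ^ 2 := hlow
        _ = ∑' i, ⟪ContinuousLinearMap.adjoint V f, g i⟫ ^ 2 := by
            simp_rw [hadj]
    rw [div_mul_eq_mul_div, div_le_iff₀ hB]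
    nlinarith [this]
  · intro hsurj
    obtain ⟨C, hC, hCy⟩ := ContinuousLinearMap.exists_preimage_norm_le V hsurj
    -- ‖f‖ ≤ C ‖V† f‖
    have hbb : ∀ f : H, ‖f‖ ≤ C * ‖ContinuousLinearMap.adjoint V f‖ := by
      intro f
      obtain ⟨x, hx, hxn⟩ := hCy f
      rcases eq_or_ne f 0 with rfl | hf
      · simp [mul_nonneg hC.le (norm_nonneg _)]
      have h1 : ‖f‖ ^ 2 = ⟪ContinuousLinearMap.adjoint V f, x⟫ := by
        rw [ContinuousLinearMap.adjoint_inner_left, hx, real_inner_self_eq_norm_sq]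
      have h2 : ‖f‖ ^ 2 ≤ ‖ContinuousLinearMap.adjoint V f‖ * (C * ‖f‖) := by
        rw [h1]
        exact (real_inner_le_norm _ _).trans
          (mul_le_mul_of_nonneg_left hxn (norm_nonneg _))
      have hfpos : 0 < ‖f‖ := norm_pos_iff.mpr hf
      have := (mul_le_mul_iff_of_pos_right hfpos).mp (by calc ‖f‖ * ‖f‖ = ‖f‖ ^ 2 := by ring
        _ ≤ ‖ContinuousLinearMap.adjoint V f‖ * (C * ‖f‖) := h2
        _ = C * ‖ContinuousLinearMap.adjoint V f‖ * ‖f‖ := by ring)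
      exact this
    have hCpos : (0 : ℝ) < C := hC
    refine ⟨A / C ^ 2, B * (‖V‖ ^ 2 + 1), div_pos hA (by positivity), by positivity, fun f => ?_⟩
    obtain ⟨hsum, hlow, hup⟩ := hfr (ContinuousLinearMap.adjoint V f)
    have heq : (fun i => ⟪f, V (g i)⟫ ^ 2)
        = fun i => ⟪ContinuousLinearMap.adjoint V f, g i⟫ ^ 2 := by
      funext i; rw [hadj]
    refine ⟨heq ▸ hsum, ?_, ?_⟩
    · rw [heq]
      refine le_trans ?_ hlow
      have h1 : ‖f‖ ^ 2 ≤ C ^ 2 * ‖ContinuousLinearMap.adjoint V f‖ ^ 2 := by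
        have := hbb f
        calc ‖f‖ ^ 2 = ‖f‖ * ‖f‖ := by ring
          _ ≤ (C * ‖ContinuousLinearMap.adjoint V f‖) * (C * ‖ContinuousLinearMap.adjoint V f‖) :=
            mul_le_mul this this (norm_nonneg _) (by positivity)
          _ = C ^ 2 * ‖ContinuousLinearMap.adjoint V f‖ ^ 2 := by ring
      calc A / C ^ 2 * ‖f‖ ^ 2 ≤ A / C ^ 2 * (C ^ 2 * ‖ContinuousLinearMap.adjoint V f‖ ^ 2) := by
            apply mul_le_mul_of_nonneg_left h1 (by positivity)
        _ = A * ‖ContinuousLinearMap.adjoint V f‖ ^ 2 := by field_simp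
    · rw [heq]
      refine hup.trans ?_
      have h1 : ‖ContinuousLinearMap.adjoint V f‖ ≤ ‖V‖ * ‖f‖ := by
        calc ‖ContinuousLinearMap.adjoint V f‖ ≤ ‖ContinuousLinearMap.adjoint V‖ * ‖f‖ :=
            (ContinuousLinearMap.adjoint V).le_opNorm f
          _ = ‖V‖ * ‖f‖ := by rw [ContinuousLinearMap.adjoint.norm_map]
      have h2 : ‖ContinuousLinearMap.adjoint V f‖ ^ 2 ≤ (‖V‖ ^ 2 + 1) * ‖f‖ ^ 2 := by
        calc ‖ContinuousLinearMap.adjoint V f‖ ^ 2 ≤ (‖V‖ * ‖f‖) ^ 2 := by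
              apply pow_le_pow_left₀ (norm_nonneg _) h1
          _ = ‖V‖ ^ 2 * ‖f‖ ^ 2 := by ring
          _ ≤ (‖V‖ ^ 2 + 1) * ‖f‖ ^ 2 := by nlinarith [sq_nonneg ‖f‖]
      calc B * ‖ContinuousLinearMap.adjoint V f‖ ^ 2 ≤ B * ((‖V‖ ^ 2 + 1) * ‖f‖ ^ 2) :=
            mul_le_mul_of_nonneg_left h2 hB.le
        _ = B * (‖V‖ ^ 2 + 1) * ‖f‖ ^ 2 := by ring
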